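/- For every t > 0, with y(t) = 2(1-e^{-2t})² / ((1+e^{-t})⁴ + (1-e^{-t})⁴), the inequality (t²/2)·(1-y(t))·(1/y(t) - y(t)) < 1 holds. -/

import Mathlib

open Real

/-- For every t > 0, with y(t) = 2(1-e^{-2t})²/((1+e^{-t})⁴+(1-e^{-t})⁴),
we have (t²/2)(1 - y(t))(1/y(t) - y(t)) < 1. -/
theorem y_inequality (t : ℝ) (ht : 0 < t) :
    let y : ℝ := 2 * (1 - exp (-2 * t)) ^ 2 /
      ((1 + exp (-t)) ^ 4 + (1 - exp (-t)) ^ 4)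
    t ^ 2 / 2 * (1 - y) * (1 / y - y) < 1 := by
  intro y
  set x : ℝ := exp (-t) with hxdef
  have hx0 : 0 < x := exp_pos _
  have hx1 : x < 1 := exp_lt_one_iff.mpr (by linarith)
  have h2 : exp (-2 * t) = x ^ 2 := by
    rw [show (-2 * t) = (-t) + (-t) by ring, exp_add]; ring
  have hxinv : exp t = 1 / x := by
    rw [hxdef, one_div, ← exp_neg, neg_neg]
  have hD : (0:ℝ) < 1 + 6 * x ^ 2 + x ^ 4 := by positivity
  have h1x : (0:ℝ) < 1 - x ^ 2 := by nlinarith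
  -- key : 2*t*x < 1 - x^2
  have hsinh : t < Real.sinh t := Real.self_lt_sinh_iff.mpr ht
  have hkey : 2 * t * x < 1 - x ^ 2 := by
    rw [Real.sinh_eq, hxinv] at hsinh
    have : 2 * t < 1 / x - x := by linarith [hsinh]
    have h := mul_lt_mul_of_pos_right this hx0
    calc 2 * t * x < (1 / x - x) * x := h
      _ = 1 - x ^ 2 := by field_simp
  have hy : y = (1 - x ^ 2) ^ 2 / (1 + 6 * x ^ 2 + x ^ 4) := by
    show 2 * (1 - exp (-2 * t)) ^ 2 / ((1 + x) ^ 4 + (1 - x) ^ 4) = _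
    rw [h2, div_eq_div_iff (by positivity) (by positivity)]
    ring
  have hexpr : t ^ 2 / 2 * (1 - y) * (1 / y - y)
      = 64 * t ^ 2 * x ^ 4 * (1 + x ^ 2) ^ 2
        / ((1 + 6 * x ^ 2 + x ^ 4) ^ 2 * (1 - x ^ 2) ^ 2) := by
    rw [hy]
    field_simp
    ring
  rw [hexpr, div_lt_one (by positivity)]
  have hsq : 4 * t ^ 2 * x ^ 2 < (1 - x ^ 2) ^ 2 := by
    nlinarith [mul_pos (mul_pos (by norm_num : (0:ℝ)<2) ht) hx0]
  have hpoly : 4 * x * (1 + x ^ 2) ≤ 1 + 6 * x ^ 2 + x ^ 4 := by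
    nlinarith [pow_le_pow_left₀ (by linarith : (0:ℝ) ≤ 1 - x) (le_refl (1-x)) 4, sq_nonneg (1-x), sq_nonneg ((1-x)^2)]
  have hA : 16 * x ^ 2 * (1 + x ^ 2) ^ 2 ≤ (1 + 6 * x ^ 2 + x ^ 4) ^ 2 := by
    nlinarith [mul_self_le_mul_self (by positivity : (0:ℝ) ≤ 4 * x * (1 + x ^ 2)) hpoly]
  have hB : 64 * t ^ 2 * x ^ 4 * (1 + x ^ 2) ^ 2
      < 16 * x ^ 2 * (1 + x ^ 2) ^ 2 * (1 - x ^ 2) ^ 2 := by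
    nlinarith [mul_lt_mul_of_pos_left hsq (show (0:ℝ) < 16 * x ^ 2 * (1 + x ^ 2) ^ 2 by positivity)]
  calc 64 * t ^ 2 * x ^ 4 * (1 + x ^ 2) ^ 2
      < 16 * x ^ 2 * (1 + x ^ 2) ^ 2 * (1 - x ^ 2) ^ 2 := hB
    _ ≤ (1 + 6 * x ^ 2 + x ^ 4) ^ 2 * (1 - x ^ 2) ^ 2 :=
        mul_le_mul_of_nonneg_right hA (sq_nonneg _)
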